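/- arXiv:0902.2291 — 2 statements merged into one kernel-verified Lean document; each statement's English description precedes it below -/
import Mathlib

section
/- Let λ be a partition of n+1 and let t be a bijective λ-tableau (not necessarily standard). Suppose that the symbol n+1 occupies a column of length r in t, and let (r, c) be the removable node of λ in row r (so c = λ_r). Let R be the set of symbols in t whose columns have length strictly smaller than r. Then in the Specht module S^λ over ℤ one has e_t · L_{n+1} = (c − r) e_t + Σ_{i ∈ R} e_{t·(n+1, i)}. -/
namespace CarterPayne

open Finset

/-- A partition of `n`, presented by its parts function; rows are indexed from `1`. -/
structure Partition (n : ℕ) where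
  parts : ℕ → ℕ
  parts_zero : parts 0 = 0
  antitone : ∀ ⦃i j : ℕ⦄, 0 < i → i ≤ j → parts j ≤ parts i
  finite_support : (Function.support parts).Finite
  sum_parts : ∑ᶠ i, parts i = n

variable {n : ℕ}

/-- The set of cells `(row, column)` (both 1-indexed) of the Young diagram of `μ`. -/
def Partition.cells (μ : Partition n) : Set (ℕ × ℕ) :=
  {c | 0 < c.1 ∧ 0 < c.2 ∧ c.2 ≤ μ.parts c.1}

/-- A tabloid for the composition `c` of `n`: an assignment of the `n` symbols to rows
(rows indexed from 1), row `i` receiving exactly `c i` symbols. -/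
def Tabloid (n : ℕ) (c : ℕ → ℕ) : Type :=
  {g : Fin n → ℕ // ∀ i, (Finset.univ.filter fun k => g k = i).card = c i}

/-- The permutation module `M^c` over `R`: the free `R`-module on the set of tabloids. -/
abbrev PermMod (R : Type*) [CommRing R] (n : ℕ) (c : ℕ → ℕ) := Tabloid n c →₀ R

/-- The action of a permutation of the symbols on tabloids. -/
def permTabloid (c : ℕ → ℕ) (π : Equiv.Perm (Fin n)) (f : Tabloid n c) : Tabloid n c :=
  ⟨fun k => f.1 (π.symm k), fun i => by
    rw [← f.2 i]
    exact Finset.card_equiv π.symm fun a => by simp⟩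

/-- The `R`-linear action of a permutation of the symbols on `M^c`. -/
noncomputable def permM (R : Type*) [CommRing R] (c : ℕ → ℕ) (π : Equiv.Perm (Fin n)) :
    PermMod R n c →ₗ[R] PermMod R n c :=
  Finsupp.lmapDomain R R (permTabloid c π)

/-- A bijective `μ`-tableau, presented by the placement map which sends each of the
`n` symbols to the cell of the Young diagram containing it. -/
structure Placement (μ : Partition n) where
  pos : Fin n → ℕ × ℕ
  mem : ∀ k, pos k ∈ μ.cells
  inj : Function.Injective pos
  surj : ∀ c ∈ μ.cells, ∃ k, pos k = c

/-- The column stabilizer of a bijective tableau, as a set of permutations of the symbols. -/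
def colStab {μ : Partition n} (T : Placement μ) : Finset (Equiv.Perm (Fin n)) :=
  Finset.univ.filter fun π => ∀ k, (T.pos (π k)).2 = (T.pos k).2

lemma rowFiber_card {μ : Partition n} (T : Placement μ) (i : ℕ) :
    (Finset.univ.filter fun k => (T.pos k).1 = i).card = μ.parts i := by
  classical
  have h : (Finset.univ.filter fun k => (T.pos k).1 = i).card
      = (Finset.Icc 1 (μ.parts i)).card := by
    apply Finset.card_bij (fun k _ => (T.pos k).2)
    · intro a ha
      simp only [Finset.mem_filter, Finset.mem_univ, true_and] at ha
      obtain ⟨h1, h2, h3⟩ := T.mem a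
      exact Finset.mem_Icc.mpr ⟨h2, ha ▸ h3⟩
    · intro a ha b hb hab
      simp only [Finset.mem_filter, Finset.mem_univ, true_and] at ha hb
      exact T.inj (Prod.ext (ha.trans hb.symm) hab)
    · intro j hj
      rw [Finset.mem_Icc] at hj
      have hi0 : 0 < i := by
        rcases Nat.eq_zero_or_pos i with h0 | h0
        · exfalso; rw [h0, μ.parts_zero] at hj; omega
        · exact h0
      obtain ⟨k, hk⟩ := T.surj (i, j) ⟨hi0, hj.1, hj.2⟩
      exact ⟨k, by simp [hk], by simp [hk]⟩
  rw [h, Nat.card_Icc]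
  omega

/-- The row tabloid `{tπ}` associated to the bijective tableau `tπ`. -/
def rowTabloid {μ : Partition n} (T : Placement μ) (π : Equiv.Perm (Fin n)) :
    Tabloid n μ.parts :=
  ⟨fun k => (T.pos (π k)).1, fun i => by
    rw [← rowFiber_card T i]
    exact Finset.card_equiv π fun a => by simp⟩

/-- The polytabloid `e_t` attached to a bijective tableau `t`. -/
noncomputable def polytabloid (R : Type*) [CommRing R] {μ : Partition n} (T : Placement μ) :
    PermMod R n μ.parts :=
  ∑ π ∈ colStab T, ((Equiv.Perm.sign π : ℤ) : R) • Finsupp.single (rowTabloid T π) (1 : R)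

/-- The Specht module `S^μ`, the span in `M^μ` of all polytabloids. -/
noncomputable def Specht (R : Type*) [CommRing R] (μ : Partition n) :
    Submodule R (PermMod R n μ.parts) :=
  Submodule.span R (Set.range fun T : Placement μ => polytabloid R T)

/-- `β` is obtained from the partition `α` of `n` by moving one box from
(the end of) row `a` to (the end of) row `b`; i.e. `β` is a one-box-shift of `α`. -/
structure OneBoxShift {n : ℕ} (α β : Partition n) (a b : ℕ) : Prop where
  a_pos : 0 < a
  a_lt_b : a < b
  rem : α.parts (a + 1) < α.parts a
  add : α.parts b < α.parts (b - 1)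
  at_a : β.parts a = α.parts a - 1
  at_b : β.parts b = α.parts b + 1
  elsewhere : ∀ i, i ≠ a → i ≠ b → β.parts i = α.parts i

/-- The Jucys-Murphy element `L_{n+1} = Σ_{i ≤ n} (i, n+1)`, acting on `M^c`. -/
noncomputable def jucysMurphy (R : Type*) [CommRing R] {n : ℕ} (c : ℕ → ℕ) :
    PermMod R (n + 1) c →ₗ[R] PermMod R (n + 1) c :=
  ∑ k ∈ Finset.univ.filter (fun k : Fin (n + 1) => k ≠ Fin.last n),
    permM R c (Equiv.swap k (Fin.last n))

/-- The length of column `c` of the Young diagram of `λ`. -/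
noncomputable def colLen {m : ℕ} (lam : Partition m) (c : ℕ) : ℕ :=
  {i : ℕ | 0 < i ∧ c ≤ lam.parts i}.ncard

/-- The tableau obtained from `t` by permuting its entries by `π` (the symbol at a cell
of `t·π` is obtained via `π` from the one at the same cell of `t`). -/
def Placement.permute {m : ℕ} {μ : Partition m} (T : Placement μ) (π : Equiv.Perm (Fin m)) :
    Placement μ where
  pos := T.pos ∘ π
  mem k := T.mem (π k)
  inj := T.inj.comp π.injective
  surj c hc := by
    obtain ⟨k, hk⟩ := T.surj c hc
    exact ⟨π.symm k, by simpa using hk⟩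

/-! ### Auxiliary lemmas -/

section Aux

variable {m : ℕ} {lam : Partition m}

open Equiv Equiv.Perm

lemma mem_colStab {T : Placement lam} {π : Equiv.Perm (Fin m)} :
    π ∈ colStab T ↔ ∀ k, (T.pos (π k)).2 = (T.pos k).2 := by
  simp [colStab]

lemma one_mem_colStab (T : Placement lam) : 1 ∈ colStab T :=
  mem_colStab.mpr fun _ => rfl

lemma mul_mem_colStab {T : Placement lam} {σ τ : Equiv.Perm (Fin m)}
    (hσ : σ ∈ colStab T) (hτ : τ ∈ colStab T) : σ * τ ∈ colStab T :=
  mem_colStab.mpr fun k => by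
    rw [Equiv.Perm.mul_apply, mem_colStab.mp hσ, mem_colStab.mp hτ]

lemma inv_mem_colStab {T : Placement lam} {σ : Equiv.Perm (Fin m)}
    (hσ : σ ∈ colStab T) : σ⁻¹ ∈ colStab T :=
  mem_colStab.mpr fun k => by
    conv_rhs => rw [← (show σ (σ⁻¹ k) = k from Equiv.apply_symm_apply σ k)]
    rw [mem_colStab.mp hσ]

lemma rowTabloid_permute (T : Placement lam) (π σ : Equiv.Perm (Fin m)) :
    rowTabloid (T.permute π) σ = rowTabloid T (π * σ) :=
  Subtype.ext (funext fun _ => rfl)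

lemma mem_colStab_permute {T : Placement lam} {π σ : Equiv.Perm (Fin m)} :
    σ ∈ colStab (T.permute π) ↔ π * σ * π⁻¹ ∈ colStab T := by
  rw [mem_colStab, mem_colStab]
  constructor
  · intro h k
    have := h (π⁻¹ k)
    simpa [Placement.permute] using this
  · intro h k
    have := h (π k)
    simpa [Placement.permute] using this

lemma polytabloid_permute (T : Placement lam) (π : Equiv.Perm (Fin m)) :
    polytabloid ℤ (T.permute π)
      = ∑ τ ∈ colStab T,
          ((Equiv.Perm.sign τ : ℤ) : ℤ) • Finsupp.single (rowTabloid T (τ * π)) (1 : ℤ) := by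
  rw [polytabloid]
  refine Finset.sum_nbij' (fun σ => π * σ * π⁻¹) (fun τ => π⁻¹ * τ * π) ?_ ?_ ?_ ?_ ?_
  · intro σ hσ
    exact mem_colStab_permute.mp hσ
  · intro τ hτ
    apply mem_colStab_permute.mpr
    group
    simpa using hτ
  · intro σ _; group
  · intro τ _; group
  · intro σ hσ
    have h1 : Equiv.Perm.sign (π * σ * π⁻¹) = Equiv.Perm.sign σ := by
      rw [Equiv.Perm.sign_mul, Equiv.Perm.sign_mul, Equiv.Perm.sign_inv,
        mul_comm, ← mul_assoc, Int.units_mul_self, one_mul]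
    have h2 : (π * σ * π⁻¹) * π = π * σ := by group
    rw [h1, h2, rowTabloid_permute]
    norm_cast

lemma permTabloid_rowTabloid (T : Placement lam) (π τ : Equiv.Perm (Fin m)) :
    permTabloid lam.parts π (rowTabloid T τ) = rowTabloid T (τ * π⁻¹) :=
  Subtype.ext (funext fun _ => rfl)

lemma permM_polytabloid (T : Placement lam) (π : Equiv.Perm (Fin m)) :
    permM ℤ lam.parts π (polytabloid ℤ T) = polytabloid ℤ (T.permute π⁻¹) := by
  rw [polytabloid, map_sum, polytabloid_permute]
  refine Finset.sum_congr rfl fun τ _ => ?_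
  rw [map_smul]
  congr 1
  rw [permM, Finsupp.lmapDomain_apply, Finsupp.mapDomain_single, permTabloid_rowTabloid]

lemma polytabloid_permute_one (T : Placement lam) :
    polytabloid ℤ (T.permute 1) = polytabloid ℤ T := by
  rw [polytabloid_permute, polytabloid]
  simp

lemma sign_cast_mul_self (ρ : Equiv.Perm (Fin m)) :
    ((Equiv.Perm.sign ρ : ℤˣ) : ℤ) * ((Equiv.Perm.sign ρ : ℤˣ) : ℤ) = 1 := by
  rw [← Units.val_mul, Int.units_mul_self, Units.val_one]

lemma polytabloid_permute_mul {T : Placement lam} {ρ : Equiv.Perm (Fin m)}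
    (hρ : ρ ∈ colStab T) (π : Equiv.Perm (Fin m)) :
    polytabloid ℤ (T.permute (ρ * π))
      = ((Equiv.Perm.sign ρ : ℤˣ) : ℤ) • polytabloid ℤ (T.permute π) := by
  rw [polytabloid_permute, polytabloid_permute, Finset.smul_sum]
  refine Finset.sum_nbij' (fun τ => τ * ρ) (fun τ => τ * ρ⁻¹) ?_ ?_ ?_ ?_ ?_
  · intro τ hτ; exact mul_mem_colStab hτ hρ
  · intro τ hτ; exact mul_mem_colStab hτ (inv_mem_colStab hρ)
  · intro τ _; group
  · intro τ _; group
  · intro τ _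
    rw [smul_smul, mul_assoc τ ρ π]
    congr 1
    rw [Equiv.Perm.sign_mul]
    push_cast
    linear_combination (-((Equiv.Perm.sign τ : ℤˣ) : ℤ)) * sign_cast_mul_self ρ

lemma le_colLen_iff (lam : Partition m) {j i : ℕ} (hj : 0 < j) (hi : 0 < i) :
    i ≤ colLen lam j ↔ j ≤ lam.parts i := by
  classical
  have hfin : {i : ℕ | 0 < i ∧ j ≤ lam.parts i}.Finite := by
    apply lam.finite_support.subset
    intro a ha
    have h2 : j ≤ lam.parts a := ha.2
    exact Function.mem_support.mpr (by omega)
  have hbdd : BddAbove {i : ℕ | 0 < i ∧ j ≤ lam.parts i} := hfin.bddAbove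
  rcases Set.eq_empty_or_nonempty {i : ℕ | 0 < i ∧ j ≤ lam.parts i} with he | hne
  · have h1 : colLen lam j = 0 := by
      unfold colLen
      rw [he]
      simp
    rw [h1]
    constructor
    · omega
    · intro hji
      exfalso
      have : i ∈ {i : ℕ | 0 < i ∧ j ≤ lam.parts i} := ⟨hi, hji⟩
      rw [he] at this
      exact this
  · set M := sSup {i : ℕ | 0 < i ∧ j ≤ lam.parts i} with hM
    have hMmem : M ∈ {i : ℕ | 0 < i ∧ j ≤ lam.parts i} := Nat.sSup_mem hne hbdd
    have key : ∀ a : ℕ, a ∈ {i : ℕ | 0 < i ∧ j ≤ lam.parts i} ↔ 1 ≤ a ∧ a ≤ M := by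
      intro a
      constructor
      · intro ha; exact ⟨ha.1, le_csSup hbdd ha⟩
      · intro ⟨h1, h2⟩
        exact ⟨h1, le_trans hMmem.2 (lam.antitone h1 h2)⟩
    have hSM : {i : ℕ | 0 < i ∧ j ≤ lam.parts i} = Set.Icc 1 M :=
      Set.ext fun a => (key a).trans Set.mem_Icc.symm
    have hcol : colLen lam j = M := by
      unfold colLen
      rw [hSM, ← Finset.coe_Icc, Set.ncard_coe_finset, Nat.card_Icc]
      omega
    rw [hcol]
    constructor
    · intro hiM
      exact ((key i).mpr ⟨hi, hiM⟩).2
    · intro hji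
      exact ((key i).mp ⟨hi, hji⟩).2

lemma colFiber_card (T : Placement lam) {j : ℕ} (hj : 0 < j) :
    (Finset.univ.filter fun k => (T.pos k).2 = j).card = colLen lam j := by
  classical
  have h : (Finset.univ.filter fun k => (T.pos k).2 = j).card
      = (Finset.Icc 1 (colLen lam j)).card := by
    apply Finset.card_bij (fun k _ => (T.pos k).1)
    · intro a ha
      simp only [Finset.mem_filter, Finset.mem_univ, true_and] at ha
      obtain ⟨h1, _, h3⟩ := T.mem a
      exact Finset.mem_Icc.mpr ⟨h1, (le_colLen_iff lam hj h1).mpr (ha ▸ h3)⟩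
    · intro a ha b hb hab
      simp only [Finset.mem_filter, Finset.mem_univ, true_and] at ha hb
      exact T.inj (Prod.ext hab (ha.trans hb.symm))
    · intro i hi
      rw [Finset.mem_Icc] at hi
      have h2 : j ≤ lam.parts i := (le_colLen_iff lam hj (by omega)).mp hi.2
      obtain ⟨k, hk⟩ := T.surj (i, j) ⟨by omega, hj, h2⟩
      exact ⟨k, by simp [hk], by simp [hk]⟩
  rw [h, Nat.card_Icc]
  omega

lemma column_relation (T : Placement lam) (b : Fin m) {j : ℕ} (hj : 0 < j)
    (hbj : (T.pos b).2 ≠ j) (hlen : colLen lam (T.pos b).2 ≤ colLen lam j) :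
    ∑ k ∈ Finset.univ.filter (fun k => (T.pos k).2 = j),
        polytabloid ℤ (T.permute (Equiv.swap b k)) = polytabloid ℤ T := by
  classical
  set X := Finset.univ.filter (fun k => (T.pos k).2 = j) with hX
  set G := Finset.univ.filter
    (fun σ : Equiv.Perm (Fin m) => ∀ k, σ k ≠ k → (T.pos k).2 = j ∨ k = b) with hG
  set H := Finset.univ.filter
    (fun ρ : Equiv.Perm (Fin m) => ∀ k, ρ k ≠ k → (T.pos k).2 = j) with hH
  have hbX : b ∉ X := by simp [hX, hbj]
  have hXb : ∀ k ∈ X, k ≠ b := by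
    intro k hk
    simp only [hX, Finset.mem_filter, Finset.mem_univ, true_and] at hk
    intro he
    exact hbj (he ▸ hk)
  have hHC : ∀ ρ ∈ H, ρ ∈ colStab T := by
    intro ρ hρ
    simp only [hH, Finset.mem_filter, Finset.mem_univ, true_and] at hρ
    rw [mem_colStab]
    intro k
    by_cases h : ρ k = k
    · rw [h]
    · have h1 : (T.pos k).2 = j := hρ k h
      have h2 : (T.pos (ρ k)).2 = j := hρ (ρ k) (fun he => h (ρ.injective he))
      rw [h1, h2]
  -- Step 1: the alternating sum over `G` vanishes.
  have step1 : ∑ σ ∈ G, ((Equiv.Perm.sign σ : ℤˣ) : ℤ) • polytabloid ℤ (T.permute σ) = 0 := by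
    have expand : ∀ σ : Equiv.Perm (Fin m),
        ((Equiv.Perm.sign σ : ℤˣ) : ℤ) • polytabloid ℤ (T.permute σ)
          = ∑ τ ∈ colStab T,
              (((Equiv.Perm.sign σ : ℤˣ) : ℤ) * ((Equiv.Perm.sign τ : ℤˣ) : ℤ))
                • Finsupp.single (rowTabloid T (τ * σ)) (1 : ℤ) := by
      intro σ
      rw [polytabloid_permute, Finset.smul_sum]
      exact Finset.sum_congr rfl fun τ _ => smul_smul _ _ _
    rw [Finset.sum_congr rfl fun σ _ => expand σ, Finset.sum_comm]
    apply Finset.sum_eq_zero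
    intro τ hτ
    have hτc : ∀ k, (T.pos (τ k)).2 = (T.pos k).2 := mem_colStab.mp hτ
    obtain ⟨hi0pos, hcb2, hcb3⟩ := T.mem (τ b)
    have hcolτb : (T.pos (τ b)).2 = (T.pos b).2 := hτc b
    have hbcolpos : 0 < (T.pos b).2 := (T.mem b).2.1
    have h1 : (T.pos (τ b)).1 ≤ colLen lam (T.pos b).2 :=
      (le_colLen_iff lam hbcolpos hi0pos).mpr (hcolτb ▸ hcb3)
    have h2 : j ≤ lam.parts (T.pos (τ b)).1 :=
      (le_colLen_iff lam hj hi0pos).mp (h1.trans hlen)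
    obtain ⟨y, hy⟩ := T.surj ((T.pos (τ b)).1, j) ⟨hi0pos, hj, h2⟩
    have hτx : τ (τ⁻¹ y) = y := Equiv.apply_symm_apply τ y
    have hxcol : (T.pos (τ⁻¹ y)).2 = j := by
      rw [← hτc (τ⁻¹ y), hτx, hy]
    have hxb : τ⁻¹ y ≠ b := fun h => hbj (by rw [← h, hxcol])
    have hrowx : (T.pos (τ (τ⁻¹ y))).1 = (T.pos (τ b)).1 := by
      rw [hτx, hy]
    refine Finset.sum_involution (fun σ _ => Equiv.swap (τ⁻¹ y) b * σ) ?_ ?_ ?_ ?_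
    · intro σ hσ
      have hrow : rowTabloid T (τ * (Equiv.swap (τ⁻¹ y) b * σ)) = rowTabloid T (τ * σ) := by
        apply Subtype.ext; funext k
        show (T.pos (τ (Equiv.swap (τ⁻¹ y) b (σ k)))).1 = (T.pos (τ (σ k))).1
        rcases eq_or_ne (σ k) (τ⁻¹ y) with h | hx
        · rw [h, Equiv.swap_apply_left, hrowx]
        rcases eq_or_ne (σ k) b with h | hb
        · rw [h, Equiv.swap_apply_right, ← hrowx]
        · rw [Equiv.swap_apply_of_ne_of_ne hx hb]
      have hs : ((Equiv.Perm.sign (Equiv.swap (τ⁻¹ y) b * σ) : ℤˣ) : ℤ)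
          = -((Equiv.Perm.sign σ : ℤˣ) : ℤ) := by
        rw [Equiv.Perm.sign_mul, Equiv.Perm.sign_swap hxb]
        push_cast
        ring
      rw [hrow, ← add_smul, hs]
      have : ((Equiv.Perm.sign σ : ℤˣ) : ℤ) * ((Equiv.Perm.sign τ : ℤˣ) : ℤ)
          + -((Equiv.Perm.sign σ : ℤˣ) : ℤ) * ((Equiv.Perm.sign τ : ℤˣ) : ℤ) = 0 := by ring
      rw [this, zero_smul]
    · intro σ _ _
      intro heq
      have heq' : Equiv.swap (τ⁻¹ y) b * σ = σ := heq
      have h1 : Equiv.swap (τ⁻¹ y) b = 1 := by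
        have := mul_right_cancel (a := Equiv.swap (τ⁻¹ y) b) (b := σ) (c := 1)
          (by rw [heq', one_mul])
        exact this
      have h2 : Equiv.swap (τ⁻¹ y) b (τ⁻¹ y) = τ⁻¹ y := by rw [h1]; rfl
      rw [Equiv.swap_apply_left] at h2
      exact hxb h2.symm
    · intro σ hσ
      simp only [hG, Finset.mem_filter, Finset.mem_univ, true_and] at hσ ⊢
      intro k hk
      by_cases h : σ k = k
      · rw [Equiv.Perm.mul_apply, h] at hk
        rcases eq_or_ne k (τ⁻¹ y) with rfl | hx
        · exact Or.inl hxcol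
        rcases eq_or_ne k b with rfl | hb
        · exact Or.inr rfl
        · exact absurd (Equiv.swap_apply_of_ne_of_ne hx hb) hk
      · exact hσ k h
    · intro σ _
      rw [← mul_assoc, Equiv.swap_mul_self, one_mul]
  -- Step 2: coset decomposition of the sum over `G`.
  have step2 : ∑ σ ∈ G, ((Equiv.Perm.sign σ : ℤˣ) : ℤ) • polytabloid ℤ (T.permute σ)
      = H.card • (polytabloid ℤ T
          - ∑ k ∈ X, polytabloid ℤ (T.permute (Equiv.swap b k))) := by
    have hρb : ∀ ρ ∈ H, ρ b = b := by
      intro ρ hρ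
      simp only [hH, Finset.mem_filter, Finset.mem_univ, true_and] at hρ
      by_contra h
      exact hbj (hρ b h)
    have hmain : ∑ σ ∈ G, ((Equiv.Perm.sign σ : ℤˣ) : ℤ) • polytabloid ℤ (T.permute σ)
        = ∑ p ∈ H ×ˢ insert b X,
            ((Equiv.Perm.sign (p.1 * Equiv.swap b p.2) : ℤˣ) : ℤ)
              • polytabloid ℤ (T.permute (p.1 * Equiv.swap b p.2)) := by
      refine (Finset.sum_nbij' (fun p => p.1 * Equiv.swap b p.2)
        (fun σ => (σ * Equiv.swap b (σ⁻¹ b), σ⁻¹ b)) ?_ ?_ ?_ ?_ ?_).symm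
      · -- maps product into G
        rintro ⟨ρ, k⟩ hp
        rw [Finset.mem_product] at hp
        obtain ⟨hρ, hk⟩ := hp
        simp only [hH, Finset.mem_filter, Finset.mem_univ, true_and] at hρ
        simp only [hG, Finset.mem_filter, Finset.mem_univ, true_and]
        intro k' hk'
        rw [Equiv.Perm.mul_apply] at hk'
        by_cases h : Equiv.swap b k k' = k'
        · rw [h] at hk'
          exact Or.inl (hρ k' hk')
        · rcases eq_or_ne k' b with rfl | hb
          · exact Or.inr rfl
          rcases eq_or_ne k' k with rfl | hkk
          · rcases Finset.mem_insert.mp hk with rfl | hkX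
            · exact Or.inr rfl
            · simp only [hX, Finset.mem_filter, Finset.mem_univ, true_and] at hkX
              exact Or.inl hkX
          · exact absurd (Equiv.swap_apply_of_ne_of_ne hb hkk) h
      · -- maps G into product
        intro σ hσ
        simp only [hG, Finset.mem_filter, Finset.mem_univ, true_and] at hσ
        rw [Finset.mem_product]
        have hσinvb : σ (σ⁻¹ b) = b := Equiv.apply_symm_apply σ b
        have hk0 : σ⁻¹ b ∈ insert b X := by
          rcases eq_or_ne (σ⁻¹ b) b with h | h
          · rw [h]; exact Finset.mem_insert_self _ _
          · have : σ (σ⁻¹ b) ≠ σ⁻¹ b := by rw [hσinvb]; exact fun he => h he.symm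
            rcases hσ (σ⁻¹ b) this with hc | hc
            · exact Finset.mem_insert.mpr (Or.inr (by
                simp only [hX, Finset.mem_filter, Finset.mem_univ, true_and]; exact hc))
            · exact absurd hc h
        refine ⟨?_, hk0⟩
        simp only [hH, Finset.mem_filter, Finset.mem_univ, true_and]
        intro k hk
        rcases eq_or_ne k b with rfl | hb
        · exfalso
          rw [Equiv.Perm.mul_apply, Equiv.swap_apply_left, hσinvb] at hk
          exact hk rfl
        rcases eq_or_ne k (σ⁻¹ b) with rfl | hkk
        · have hmove : σ (σ⁻¹ b) ≠ σ⁻¹ b := by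
            rw [hσinvb]; exact fun he => hb he.symm
          rcases hσ (σ⁻¹ b) hmove with hc | hc
          · exact hc
          · exact absurd hc hb
        · rw [Equiv.Perm.mul_apply, Equiv.swap_apply_of_ne_of_ne hb hkk] at hk
          rcases hσ k hk with hc | hc
          · exact hc
          · exact absurd hc hb
      · -- left inverse
        rintro ⟨ρ, k⟩ hp
        rw [Finset.mem_product] at hp
        obtain ⟨hρ, hk⟩ := hp
        have hρib : ρ⁻¹ b = b := by
          have h := congrArg (fun x => ρ⁻¹ x) (hρb ρ hρ)
          simpa using h.symm
        have hinv : (ρ * Equiv.swap b k)⁻¹ b = k := by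
          rw [mul_inv_rev, Equiv.Perm.mul_apply, Equiv.swap_inv, hρib,
            Equiv.swap_apply_left]
        dsimp only
        rw [hinv, mul_assoc, Equiv.swap_mul_self, mul_one]
      · -- right inverse
        intro σ _
        dsimp only
        rw [mul_assoc, Equiv.swap_mul_self, mul_one]
      · intro p _
        rfl
    rw [hmain, Finset.sum_product]
    have hinner : ∀ ρ ∈ H,
        (∑ k ∈ insert b X,
          ((Equiv.Perm.sign (ρ * Equiv.swap b k) : ℤˣ) : ℤ)
            • polytabloid ℤ (T.permute (ρ * Equiv.swap b k)))
        = polytabloid ℤ T - ∑ k ∈ X, polytabloid ℤ (T.permute (Equiv.swap b k)) := by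
      intro ρ hρ
      have hterm : ∀ k : Fin m,
          ((Equiv.Perm.sign (ρ * Equiv.swap b k) : ℤˣ) : ℤ)
            • polytabloid ℤ (T.permute (ρ * Equiv.swap b k))
          = ((Equiv.Perm.sign (Equiv.swap b k) : ℤˣ) : ℤ)
            • polytabloid ℤ (T.permute (Equiv.swap b k)) := by
        intro k
        rw [polytabloid_permute_mul (hHC ρ hρ), smul_smul, Equiv.Perm.sign_mul]
        congr 1
        push_cast
        rw [mul_comm ((Equiv.Perm.sign ρ : ℤˣ) : ℤ), mul_assoc, sign_cast_mul_self, mul_one]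
      rw [Finset.sum_congr rfl fun k _ => hterm k, Finset.sum_insert hbX]
      have hsb : Equiv.swap b b = (1 : Equiv.Perm (Fin m)) := Equiv.swap_self b
      rw [hsb, polytabloid_permute_one]
      simp only [map_one, Units.val_one, one_smul]
      rw [sub_eq_add_neg, ← Finset.sum_neg_distrib]
      congr 1
      apply Finset.sum_congr rfl
      intro k hk
      rw [Equiv.Perm.sign_swap (Ne.symm (hXb k hk))]
      simp
    rw [Finset.sum_congr rfl hinner, Finset.sum_const]
  -- Conclude.
  have hcardpos : 0 < H.card := by
    apply Finset.card_pos.mpr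
    exact ⟨1, by simp [hH]⟩
  have h0 : (H.card : ℤ) • (polytabloid ℤ T
      - ∑ k ∈ X, polytabloid ℤ (T.permute (Equiv.swap b k))) = 0 := by
    rw [Nat.cast_smul_eq_nsmul, ← step2, step1]
  rcases smul_eq_zero.mp h0 with h | h
  · exact absurd h (by exact_mod_cast hcardpos.ne')
  · exact (sub_eq_zero.mp h).symm

end Aux

/-- Let `λ` be a partition of `n+1` and `t` a bijective `λ`-tableau (not
necessarily standard).  Suppose the symbol `n+1` occupies a column of length `r` in `t`,
and let `(r, c)` be the removable node of `λ` in row `r` (so `c = λ_r`).  Let `R` be the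
set of symbols of `t` whose columns have length strictly smaller than `r`.  Then in the
Specht module `S^λ` over `ℤ`:
`e_t · L_{n+1} = (c - r) e_t + Σ_{i ∈ R} e_{t·(n+1, i)}`. -/
theorem stmt1 {n : ℕ} (lam : Partition (n + 1)) (t : Placement lam)
    (r : ℕ) (hr : r = colLen lam (t.pos (Fin.last n)).2)
    (c : ℕ) (hc : c = lam.parts r) :
    jucysMurphy ℤ lam.parts (polytabloid ℤ t) =
      ((c : ℤ) - (r : ℤ)) • polytabloid ℤ t +
        ∑ k ∈ Finset.univ.filter (fun k : Fin (n + 1) => colLen lam (t.pos k).2 < r),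
          polytabloid ℤ (t.permute (Equiv.swap (Fin.last n) k)) := by
  classical
  have hcell := t.mem (Fin.last n)
  have hcolpos : 0 < (t.pos (Fin.last n)).2 := hcell.2.1
  have hrowpos : 0 < (t.pos (Fin.last n)).1 := hcell.1
  have hrpos : 0 < r := by
    rw [hr]
    have := (le_colLen_iff lam hcolpos hrowpos).mpr hcell.2.2
    omega
  have hcolc : (t.pos (Fin.last n)).2 ≤ c := by
    rw [hc]
    exact (le_colLen_iff lam hcolpos hrpos).mp (le_of_eq hr)
  have hcpos : 0 < c := lt_of_lt_of_le hcolpos hcolc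
  rw [jucysMurphy, LinearMap.sum_apply]
  have hterm : ∀ k ∈ Finset.univ.filter (fun k : Fin (n+1) => k ≠ Fin.last n),
      permM ℤ lam.parts (Equiv.swap k (Fin.last n)) (polytabloid ℤ t)
        = polytabloid ℤ (t.permute (Equiv.swap (Fin.last n) k)) := by
    intro k _
    rw [permM_polytabloid, Equiv.swap_inv, Equiv.swap_comm]
  rw [Finset.sum_congr rfl hterm]
  rw [← Finset.sum_filter_add_sum_filter_not
    (Finset.univ.filter (fun k : Fin (n+1) => k ≠ Fin.last n))
    (fun k => (t.pos k).2 = (t.pos (Fin.last n)).2)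
    (fun k => polytabloid ℤ (t.permute (Equiv.swap (Fin.last n) k)))]
  rw [← Finset.sum_filter_add_sum_filter_not
    ((Finset.univ.filter (fun k : Fin (n+1) => k ≠ Fin.last n)).filter
      (fun k => ¬ (t.pos k).2 = (t.pos (Fin.last n)).2))
    (fun k => r ≤ colLen lam (t.pos k).2)
    (fun k => polytabloid ℤ (t.permute (Equiv.swap (Fin.last n) k)))]
  -- Part A: symbols in the same column as `n+1`.
  have hA : ((Finset.univ.filter (fun k : Fin (n+1) => k ≠ Fin.last n)).filter
      (fun k => (t.pos k).2 = (t.pos (Fin.last n)).2))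
      = (Finset.univ.filter (fun k : Fin (n+1) =>
          (t.pos k).2 = (t.pos (Fin.last n)).2)).erase (Fin.last n) := by
    ext k
    simp only [Finset.mem_filter, Finset.mem_univ, true_and, Finset.mem_erase]
  have hAcard : ((Finset.univ.filter (fun k : Fin (n+1) =>
      (t.pos k).2 = (t.pos (Fin.last n)).2)).erase (Fin.last n)).card = r - 1 := by
    rw [Finset.card_erase_of_mem (by simp), colFiber_card t hcolpos, ← hr]
  have hAsum : (∑ k ∈ (Finset.univ.filter (fun k : Fin (n+1) => k ≠ Fin.last n)).filter
      (fun k => (t.pos k).2 = (t.pos (Fin.last n)).2),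
        polytabloid ℤ (t.permute (Equiv.swap (Fin.last n) k)))
      = (r - 1) • (-polytabloid ℤ t) := by
    rw [hA]
    have hconst : ∀ k ∈ (Finset.univ.filter (fun k : Fin (n+1) =>
        (t.pos k).2 = (t.pos (Fin.last n)).2)).erase (Fin.last n),
        polytabloid ℤ (t.permute (Equiv.swap (Fin.last n) k)) = -polytabloid ℤ t := by
      intro k hk
      rw [Finset.mem_erase] at hk
      obtain ⟨hkb, hkf⟩ := hk
      simp only [Finset.mem_filter, Finset.mem_univ, true_and] at hkf
      have hsw : Equiv.swap (Fin.last n) k ∈ colStab t := by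
        rw [mem_colStab]
        intro k'
        rcases eq_or_ne k' (Fin.last n) with rfl | h1
        · rw [Equiv.swap_apply_left, hkf]
        rcases eq_or_ne k' k with rfl | h2
        · rw [Equiv.swap_apply_right, hkf]
        · rw [Equiv.swap_apply_of_ne_of_ne h1 h2]
      have hmul := polytabloid_permute_mul hsw 1
      rw [mul_one, polytabloid_permute_one] at hmul
      rw [hmul, Equiv.Perm.sign_swap (Ne.symm hkb)]
      simp
    rw [Finset.sum_congr rfl hconst, Finset.sum_const, hAcard]
  -- Part B: symbols in other columns of length at least `r`.
  have hBsum : (∑ k ∈ ((Finset.univ.filter (fun k : Fin (n+1) => k ≠ Fin.last n)).filter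
      (fun k => ¬ (t.pos k).2 = (t.pos (Fin.last n)).2)).filter
        (fun k => r ≤ colLen lam (t.pos k).2),
          polytabloid ℤ (t.permute (Equiv.swap (Fin.last n) k)))
      = (c - 1) • polytabloid ℤ t := by
    have hmaps : ∀ k ∈ ((Finset.univ.filter (fun k : Fin (n+1) => k ≠ Fin.last n)).filter
        (fun k => ¬ (t.pos k).2 = (t.pos (Fin.last n)).2)).filter
          (fun k => r ≤ colLen lam (t.pos k).2),
        (t.pos k).2 ∈ (Finset.Icc 1 c).erase (t.pos (Fin.last n)).2 := by
      intro k hk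
      simp only [Finset.mem_filter, Finset.mem_univ, true_and] at hk
      obtain ⟨⟨_, hne⟩, hlen⟩ := hk
      rw [Finset.mem_erase, Finset.mem_Icc]
      have hkpos : 0 < (t.pos k).2 := (t.mem k).2.1
      refine ⟨hne, hkpos, ?_⟩
      rw [hc]
      exact (le_colLen_iff lam hkpos hrpos).mp hlen
    rw [← Finset.sum_fiberwise_of_maps_to hmaps
      (fun k => polytabloid ℤ (t.permute (Equiv.swap (Fin.last n) k)))]
    have hfib : ∀ j ∈ (Finset.Icc 1 c).erase (t.pos (Fin.last n)).2,
        (∑ k ∈ (((Finset.univ.filter (fun k : Fin (n+1) => k ≠ Fin.last n)).filter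
          (fun k => ¬ (t.pos k).2 = (t.pos (Fin.last n)).2)).filter
            (fun k => r ≤ colLen lam (t.pos k).2)).filter (fun k => (t.pos k).2 = j),
          polytabloid ℤ (t.permute (Equiv.swap (Fin.last n) k)))
        = polytabloid ℤ t := by
      intro j hj
      rw [Finset.mem_erase, Finset.mem_Icc] at hj
      obtain ⟨hjne, hj1, hjc⟩ := hj
      have hjpos : 0 < j := hj1
      have hrj : r ≤ colLen lam j := by
        apply (le_colLen_iff lam hjpos hrpos).mpr
        rw [← hc]
        exact hjc
      have hset : (((Finset.univ.filter (fun k : Fin (n+1) => k ≠ Fin.last n)).filter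
          (fun k => ¬ (t.pos k).2 = (t.pos (Fin.last n)).2)).filter
            (fun k => r ≤ colLen lam (t.pos k).2)).filter (fun k => (t.pos k).2 = j)
          = Finset.univ.filter (fun k => (t.pos k).2 = j) := by
        ext k
        simp only [Finset.mem_filter, Finset.mem_univ, true_and]
        constructor
        · tauto
        · intro hkj
          have h1 : (t.pos k).2 ≠ (t.pos (Fin.last n)).2 := by
            rw [hkj]; exact hjne
          have h2 : k ≠ Fin.last n := fun h => h1 (by rw [h])
          exact ⟨⟨⟨h2, h1⟩, by rw [hkj]; exact hrj⟩, hkj⟩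
      rw [hset]
      exact column_relation t (Fin.last n) hjpos (fun h => hjne h.symm) (by rw [← hr]; exact hrj)
    rw [Finset.sum_congr rfl hfib, Finset.sum_const,
      Finset.card_erase_of_mem (Finset.mem_Icc.mpr ⟨hcolpos, hcolc⟩), Nat.card_Icc]
    have he : c + 1 - Nat.succ 0 - 1 = c - 1 := by omega
    rw [he]
  -- Part C: symbols in columns shorter than `r`.
  have hC : ((Finset.univ.filter (fun k : Fin (n+1) => k ≠ Fin.last n)).filter
      (fun k => ¬ (t.pos k).2 = (t.pos (Fin.last n)).2)).filter
        (fun k => ¬ r ≤ colLen lam (t.pos k).2)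
      = Finset.univ.filter (fun k : Fin (n+1) => colLen lam (t.pos k).2 < r) := by
    ext k
    simp only [Finset.mem_filter, Finset.mem_univ, true_and, not_le]
    constructor
    · tauto
    · intro h
      have h1 : (t.pos k).2 ≠ (t.pos (Fin.last n)).2 := by
        intro he
        rw [he, ← hr] at h
        omega
      have h2 : k ≠ Fin.last n := fun he => h1 (by rw [he])
      exact ⟨⟨h2, h1⟩, h⟩
  rw [hAsum, hBsum, hC, ← add_assoc]
  congr 1
  have key : (r - 1) • (-polytabloid ℤ t) + (c - 1) • polytabloid ℤ t
      = ((c : ℤ) - (r : ℤ)) • polytabloid ℤ t := by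
    rw [← Nat.cast_smul_eq_nsmul ℤ (r - 1), ← Nat.cast_smul_eq_nsmul ℤ (c - 1),
      smul_neg, ← neg_smul, ← add_smul]
    congr 1
    omega
  exact key

end CarterPayne
end

section
/- Let F be a field of characteristic p > 2, let α be a partition of n and β a one-box-shift of α with β_a = α_a − 1 and β_b = α_b + 1 for a < b, and let T be a semistandard α-tableau of type β. If i ≥ 1 and 1 ≤ r ≤ β_{i+1} − 1 are such that the composite θ̂_T ∘ ψ_{i,r} : S^α → M^ν is non-zero, then a ≤ i < b and r = β_{i+1} − 1. -/
namespace CarterPayne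

open Finset

variable {n : ℕ}

-- finiteness of the set of tabloids
lemma tabloid_finite (n : ℕ) (c : ℕ → ℕ) :
    {g : Fin n → ℕ | ∀ i, (Finset.univ.filter fun k => g k = i).card = c i}.Finite := by
  classical
  rcases Set.eq_empty_or_nonempty
      {g : Fin n → ℕ | ∀ i, (Finset.univ.filter fun k => g k = i).card = c i} with h | ⟨g₀, hg₀⟩
  · rw [h]; exact Set.finite_empty
  · apply Set.Finite.subset (Set.Finite.pi fun _ : Fin n => Set.finite_range g₀)
    intro g hg
    simp only [Set.mem_pi, Set.mem_univ, forall_true_left]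
    intro k
    have h1 : (Finset.univ.filter fun k' => g k' = g k).card = c (g k) := hg (g k)
    have h2 : (Finset.univ.filter fun k' => g₀ k' = g k).card = c (g k) := hg₀ (g k)
    have hp : 0 < c (g k) := by
      rw [← h1]
      exact Finset.card_pos.mpr ⟨k, by simp⟩
    rw [← h2] at hp
    obtain ⟨k', hk'⟩ := Finset.card_pos.mp hp
    simp only [Finset.mem_filter] at hk'
    exact ⟨k', hk'.2⟩

noncomputable instance (c : ℕ → ℕ) : Fintype (Tabloid n c) :=
  (tabloid_finite n c).fintype

lemma cells_finite (μ : Partition n) : μ.cells.Finite := by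
  apply Set.Finite.subset (μ.finite_support.prod (Set.finite_Icc 1 (μ.parts 1)))
  rintro ⟨i, j⟩ ⟨h1, h2, h3⟩
  refine Set.mem_prod.mpr ⟨?_, ?_⟩
  · simp only [Function.mem_support]
    intro h0
    rw [h0] at h3; omega
  · exact ⟨h2, le_trans h3 (μ.antitone Nat.one_pos h1)⟩

/-- The finset of cells of the Young diagram of `μ`. -/
noncomputable def cellFinset (μ : Partition n) : Finset (ℕ × ℕ) := (cells_finite μ).toFinset

/-- An `α`-tableau (a filling of the diagram of `α` by natural numbers) has type `c`
if the entry `j` appears exactly `c j` times. -/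
def IsTypeOf (α : Partition n) (c : ℕ → ℕ) (T : ℕ × ℕ → ℕ) : Prop :=
  ∀ j, ((cellFinset α).filter fun cc => T cc = j).card = c j

/-- A filling of the diagram of `α` is semistandard if its entries are nondecreasing
along rows and strictly increasing down columns. -/
def IsSemistandard (α : Partition n) (T : ℕ × ℕ → ℕ) : Prop :=
  (∀ i j j', (i, j) ∈ α.cells → (i, j') ∈ α.cells → j ≤ j' → T (i, j) ≤ T (i, j')) ∧
  (∀ i i' j, (i, j) ∈ α.cells → (i', j) ∈ α.cells → i < i' → T (i, j) < T (i', j))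

/-- Number of entries equal to `j` in row `i` of the `α`-tableau `T`. -/
def rowContent (α : Partition n) (T : ℕ × ℕ → ℕ) (i j : ℕ) : ℕ :=
  ((Finset.Icc 1 (α.parts i)).filter fun col => T (i, col) = j).card

open Classical in
/-- James' homomorphism `θ_T : M^α → M^c` attached to an `α`-tableau `T` of type `c`:
an `α`-tabloid `f` is sent to the sum of all `c`-tabloids `g` such that, for all `i`, `j`,
exactly `rowContent α T i j` symbols lie in row `i` of `f` and row `j` of `g`.  (This is
the sum over the row-equivalence class of `T` of the corresponding tabloids.) -/
noncomputable def theta (R : Type*) [CommRing R] (α : Partition n) (c : ℕ → ℕ)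
    (T : ℕ × ℕ → ℕ) : PermMod R n α.parts →ₗ[R] PermMod R n c :=
  Finsupp.lift (PermMod R n c) R (Tabloid n α.parts) fun f =>
    ∑ g ∈ Finset.univ.filter (fun g : Tabloid n c =>
        ∀ i j, (Finset.univ.filter fun k => f.1 k = i ∧ g.1 k = j).card = rowContent α T i j),
      Finsupp.single g (1 : R)

/-- The restriction `θ̂_T` of `θ_T` to the Specht module `S^α`. -/
noncomputable def thetaHat (R : Type*) [CommRing R] (α : Partition n) (c : ℕ → ℕ)
    (T : ℕ × ℕ → ℕ) : ↥(Specht R α) →ₗ[R] PermMod R n c :=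
  (theta R α c T).comp (Specht R α).subtype

/-- The composition `ν` obtained from `c` by replacing the rows `i`, `i+1` with rows of
sizes `c i + c (i+1) - r` and `r`. -/
def nuComp (c : ℕ → ℕ) (i r : ℕ) : ℕ → ℕ :=
  fun j => if j = i then c i + c (i + 1) - r else if j = i + 1 then r else c j

open Classical in
/-- James' homomorphism `ψ_{i,r} : M^c → M^ν`: a tabloid is sent to the sum of all
tabloids obtained from it by changing all but `r` of the entries in row `i+1` to `i`. -/
noncomputable def psi (R : Type*) [CommRing R] (c : ℕ → ℕ) (i r : ℕ) :
    PermMod R n c →ₗ[R] PermMod R n (nuComp c i r) :=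
  Finsupp.lift (PermMod R n (nuComp c i r)) R (Tabloid n c) fun f =>
    ∑ g ∈ Finset.univ.filter (fun g : Tabloid n (nuComp c i r) =>
        ∀ k, g.1 k = f.1 k ∨ (f.1 k = i + 1 ∧ g.1 k = i)),
      Finsupp.single g (1 : R)

/-- Normalized semistandard `α`-tableaux of type `c` (entries outside the diagram are `0`). -/
def SSTSet (α : Partition n) (c : ℕ → ℕ) : Set (ℕ × ℕ → ℕ) :=
  {T | IsSemistandard α T ∧ IsTypeOf α c T ∧ ∀ cc, cc ∉ α.cells → T cc = 0}

lemma SSTSet_finite (α : Partition n) (c : ℕ → ℕ) (hc : (Function.support c).Finite) :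
    (SSTSet α c).Finite := by
  classical
  have hinj : Set.InjOn (fun T (cc : ↥(cellFinset α)) => T cc.1) (SSTSet α c) := by
    intro T hT S hS h
    funext cc
    by_cases hcc : cc ∈ α.cells
    · have hmem : cc ∈ cellFinset α := (Set.Finite.mem_toFinset _).mpr hcc
      exact congrFun h ⟨cc, hmem⟩
    · rw [hT.2.2 cc hcc, hS.2.2 cc hcc]
  have himage : ((fun T (cc : ↥(cellFinset α)) => T cc.1) '' SSTSet α c) ⊆
      Set.univ.pi (fun _ : ↥(cellFinset α) => insert 0 (Function.support c)) := by
    rintro _ ⟨T, hT, rfl⟩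
    intro cc _
    have h1 := hT.2.1 (T cc.1)
    have h2 : cc.1 ∈ (cellFinset α).filter fun d => T d = T cc.1 :=
      Finset.mem_filter.mpr ⟨cc.2, rfl⟩
    have h3 : 0 < c (T cc.1) := h1 ▸ Finset.card_pos.mpr ⟨cc.1, h2⟩
    exact Set.mem_insert_iff.mpr (Or.inr (by
      simp only [Function.mem_support]
      omega))
  exact Set.Finite.of_finite_image
    (Set.Finite.subset (Set.Finite.pi fun _ => hc.insert 0) himage) hinj

/-- The finset of all (normalized) semistandard `α`-tableaux of type `β`. -/
noncomputable def sstFinset (α β : Partition n) : Finset (ℕ × ℕ → ℕ) :=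
  (SSTSet_finite α β.parts β.finite_support).toFinset

/-- `T̂(u)`, the entry at the end of row `u` of `T`. -/
def hatOf (α : Partition n) (T : ℕ × ℕ → ℕ) (u : ℕ) : ℕ := T (u, α.parts u)

/-- The semistandard `α`-set `{T}` of `T`: those rows `u ∈ {a, …, b-1}` with `T̂(u) ≠ u`. -/
def Tset (α : Partition n) (a b : ℕ) (T : ℕ × ℕ → ℕ) : Finset ℕ :=
  (Finset.Icc a (b - 1)).filter fun u => hatOf α T u ≠ u

/-- The removable set `{R}`: those rows `i ∈ {a, …, b-1}` such that `(i, α_i)` is a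
removable node of `[α]`. -/
def Rset (α : Partition n) (a b : ℕ) : Finset ℕ :=
  (Finset.Icc a (b - 1)).filter fun i => α.parts (i + 1) < α.parts i

/-- The hook lengths `h_i` in the `(α_b + 1)`-th column of `[α]` (with `h_i = 0` for `i ≥ b`):
`h_i = α_i - α_b + b - i - 1`. -/
def hook (α : Partition n) (b i : ℕ) : ℤ :=
  if i < b then (α.parts i : ℤ) - (α.parts b : ℤ) + (b : ℤ) - (i : ℤ) - 1 else 0

/-- `T̂⁻¹(v)`: the row `u ∈ {a, …, b-1}` with `T̂(u) = v`. -/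
noncomputable def invHat (α : Partition n) (a b : ℕ) (T : ℕ × ℕ → ℕ) (v : ℕ) : ℕ :=
  sInf {u | a ≤ u ∧ u ≤ b - 1 ∧ hatOf α T u = v}

/-- The smallest element of `X` greater than `u`, or `b` if there is none. -/
noncomputable def nextIn (X : Finset ℕ) (b u : ℕ) : ℕ := sInf ({v | v ∈ X ∧ u < v} ∪ {b})

/-- The bijection `T̂ : {a,…,b-1} → {a+1,…,b}` determined by a semistandard set `X`:
`T̂` maps each `u ∈ X` to the next element of `X ∪ {b}` above it, and fixes `u ∉ X`. -/
noncomputable def hatOfSet (X : Finset ℕ) (b u : ℕ) : ℕ :=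
  if u ∈ X then nextIn X b u else u

open Classical in
/-- The (normalized) semistandard `α`-tableau of type `β` whose semistandard set is `X`:
every cell of row `i` contains `i`, except that for `a ≤ i ≤ b-1` the last cell of row `i`
contains `T̂(i)` (where `T̂` is the bijection determined by `X`). -/
noncomputable def tableauOfSet (α : Partition n) (a b : ℕ) (X : Finset ℕ) : ℕ × ℕ → ℕ :=
  fun cc =>
    if cc ∈ α.cells then
      (if a ≤ cc.1 ∧ cc.1 ≤ b - 1 ∧ cc.2 = α.parts cc.1 then hatOfSet X b cc.1 else cc.1)
    else 0

/-- `X` is a semistandard `α`-set of type `β` (for the one-box shift from row `a` to row `b`):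
`a ∈ X ⊆ {a, …, b-1}`, and `u ∈ X` together with `α_{u+1} = α_u` forces `u+1 ∈ X`. -/
def IsSSSet (α : Partition n) (a b : ℕ) (X : Finset ℕ) : Prop :=
  a ∈ X ∧ (∀ u ∈ X, a ≤ u ∧ u ≤ b - 1) ∧
    ∀ u ∈ X, α.parts (u + 1) = α.parts u → u + 1 ∈ X

/-- The coefficient `(-1)^{|T|} ∏_{u ∈ {R}\{T}} h_u` of `θ̂_T` in the Carter-Payne
homomorphism. -/
noncomputable def cpCoeff (α : Partition n) (a b : ℕ) (T : ℕ × ℕ → ℕ) : ℤ :=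
  (-1) ^ (Tset α a b T).card * ∏ u ∈ Rset α a b \ Tset α a b T, hook α b u

/-! ### Auxiliary lemmas for Statement 9 -/

section Stmt9Aux

variable {n : ℕ}

lemma T_pos {α β : Partition n} {T : ℕ × ℕ → ℕ} (htype : IsTypeOf α β.parts T) :
    ∀ cc ∈ α.cells, 1 ≤ T cc := by
  intro cc hcc
  by_contra h0
  push_neg at h0
  have hT0 : T cc = 0 := by omega
  have h := htype 0
  rw [β.parts_zero] at h
  have hmem : cc ∈ (cellFinset α).filter fun d => T d = 0 :=
    Finset.mem_filter.mpr ⟨(cells_finite α).mem_toFinset.mpr hcc, hT0⟩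
  have := Finset.card_pos.mpr ⟨cc, hmem⟩
  omega

lemma T_ge_row {α β : Partition n} {T : ℕ × ℕ → ℕ} (hss : IsSemistandard α T)
    (htype : IsTypeOf α β.parts T) :
    ∀ u c, (u, c) ∈ α.cells → u ≤ T (u, c) := by
  intro u
  induction u with
  | zero => intro c _; exact Nat.zero_le _
  | succ u ih =>
    intro c hc
    rcases Nat.eq_zero_or_pos u with rfl | hu
    · exact T_pos htype (0 + 1, c) hc
    · have hc' : (u, c) ∈ α.cells := by
        obtain ⟨h1, h2, h3⟩ := hc
        exact ⟨hu, h2, le_trans h3 (α.antitone hu (Nat.le_succ u))⟩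
      have h1 := hss.2 u (u + 1) c hc' hc (Nat.lt_succ_self u)
      have h2 := ih c hc'
      omega

lemma row_block_card (α : Partition n) (N : ℕ) (P : ℕ × ℕ → Prop) [DecidablePred P] :
    ((cellFinset α).filter fun cc => cc.1 ≤ N ∧ P cc).card
      = ∑ u ∈ Finset.Icc 1 N, ((Finset.Icc 1 (α.parts u)).filter fun c => P (u, c)).card := by
  classical
  rw [Finset.card_eq_sum_card_fiberwise (f := Prod.fst) (t := Finset.Icc 1 N)
    (fun cc hcc => by
      simp only [Finset.mem_coe, Finset.mem_filter] at hcc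
      have h1 : cc ∈ α.cells := (cells_finite α).mem_toFinset.mp hcc.1
      exact Finset.mem_Icc.mpr ⟨h1.1, hcc.2.1⟩)]
  refine Finset.sum_congr rfl fun u hu => ?_
  have hu1 : 1 ≤ u := (Finset.mem_Icc.mp hu).1
  have huN : u ≤ N := (Finset.mem_Icc.mp hu).2
  apply Finset.card_nbij' (i := Prod.snd) (j := fun x => (u, x))
  · intro cc hcc
    simp only [Finset.mem_coe, Finset.mem_filter] at hcc
    obtain ⟨⟨hcell, hN, hP⟩, hfst⟩ := hcc
    have h1 : cc ∈ α.cells := (cells_finite α).mem_toFinset.mp hcell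
    obtain ⟨hc1, hc2, hc3⟩ := h1
    refine Finset.mem_filter.mpr ⟨Finset.mem_Icc.mpr ⟨hc2, hfst ▸ hc3⟩, ?_⟩
    have heta : (u, cc.2) = cc := by rw [← hfst]
    rw [heta]; exact hP
  · intro x hx
    simp only [Finset.mem_coe, Finset.mem_filter, Finset.mem_Icc] at hx
    obtain ⟨⟨hx1, hx2⟩, hP⟩ := hx
    have hcell : (u, x) ∈ α.cells := ⟨hu1, hx1, hx2⟩
    exact Finset.mem_filter.mpr ⟨Finset.mem_filter.mpr
      ⟨(cells_finite α).mem_toFinset.mpr hcell, huN, hP⟩, rfl⟩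
  · intro cc hcc
    simp only [Finset.mem_coe, Finset.mem_filter] at hcc
    exact Prod.ext hcc.2.symm rfl
  · intro x _
    rfl

lemma count_value {α β : Partition n} {T : ℕ × ℕ → ℕ} (hss : IsSemistandard α T)
    (htype : IsTypeOf α β.parts T) (v N : ℕ) (hv : 1 ≤ v) (hN : v ≤ N) :
    ∑ u ∈ Finset.Icc 1 N, rowContent α T u v = β.parts v := by
  have h1 := htype v
  simp only [rowContent]
  rw [← h1, ← row_block_card α N (fun cc => T cc = v)]
  congr 1
  apply Finset.filter_congr
  intro cc hcc
  have hcell : cc ∈ α.cells := (cells_finite α).mem_toFinset.mp hcc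
  have hrow : cc.1 ≤ T cc := by
    have := T_ge_row hss htype cc.1 cc.2 (by rwa [Prod.mk.eta])
    rwa [Prod.mk.eta] at this
  constructor
  · intro h; exact h.2
  · intro h; exact ⟨by omega, h⟩

lemma G_eq {α β : Partition n} {T : ℕ × ℕ → ℕ} (hss : IsSemistandard α T)
    (htype : IsTypeOf α β.parts T) (i : ℕ) :
    ((cellFinset α).filter fun cc => cc.1 ≤ i ∧ i < T cc).card
      + ∑ v ∈ Finset.Icc 1 i, β.parts v = ∑ u ∈ Finset.Icc 1 i, α.parts u := by
  have hA : ((cellFinset α).filter fun cc => cc.1 ≤ i ∧ True).card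
      = ∑ u ∈ Finset.Icc 1 i, α.parts u := by
    rw [row_block_card]
    refine Finset.sum_congr rfl fun u _ => ?_
    rw [Finset.filter_true, Nat.card_Icc]
    omega
  have hB : ((cellFinset α).filter fun cc => cc.1 ≤ i ∧ ¬ i < T cc).card
      = ∑ v ∈ Finset.Icc 1 i, β.parts v := by
    have heq : ((cellFinset α).filter fun cc => cc.1 ≤ i ∧ ¬ i < T cc)
        = (cellFinset α).filter fun cc => T cc ∈ Finset.Icc 1 i := by
      apply Finset.filter_congr
      intro cc hcc
      have hcell : cc ∈ α.cells := (cells_finite α).mem_toFinset.mp hcc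
      have hrow : cc.1 ≤ T cc := by
        have := T_ge_row hss htype cc.1 cc.2 (by rwa [Prod.mk.eta])
        rwa [Prod.mk.eta] at this
      have hTpos : 1 ≤ T cc := T_pos htype cc hcell
      simp only [Finset.mem_Icc]
      constructor
      · intro h; exact ⟨hTpos, by omega⟩
      · intro h; exact ⟨by omega, by omega⟩
    rw [heq, Finset.card_eq_sum_card_fiberwise (f := T) (t := Finset.Icc 1 i)
      (s := (cellFinset α).filter fun cc => T cc ∈ Finset.Icc 1 i)
      (fun cc hcc => Finset.mem_coe.mpr (Finset.mem_filter.mp (Finset.mem_coe.mp hcc)).2)]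
    refine Finset.sum_congr rfl fun v hv => ?_
    have heq2 : ((cellFinset α).filter fun cc => T cc ∈ Finset.Icc 1 i).filter
        (fun cc => T cc = v) = (cellFinset α).filter fun cc => T cc = v := by
      rw [Finset.filter_filter]
      apply Finset.filter_congr
      intro cc _
      constructor
      · intro h; exact h.2
      · intro h; exact ⟨h ▸ hv, h⟩
    rw [heq2, htype v]
  have hsplit := Finset.card_filter_add_card_filter_not
    (s := (cellFinset α).filter fun cc => cc.1 ≤ i) (p := fun cc => i < T cc)
  rw [Finset.filter_filter, Finset.filter_filter] at hsplit
  have hA' : ((cellFinset α).filter fun cc => cc.1 ≤ i).card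
      = ∑ u ∈ Finset.Icc 1 i, α.parts u := by
    rw [← hA]; congr 1; apply Finset.filter_congr; intro cc _; simp
  omega

lemma sum_parts_shift {α β : Partition n} {a b : ℕ} (hsh : OneBoxShift α β a b) (i : ℕ) :
    ∑ u ∈ Finset.Icc 1 i, α.parts u
      = ∑ u ∈ Finset.Icc 1 i, β.parts u + (if a ≤ i ∧ i < b then 1 else 0) := by
  have hαa : 1 ≤ α.parts a := by have := hsh.rem; omega
  rcases lt_or_ge i a with h | h
  · rw [if_neg (by omega), add_zero]
    refine Finset.sum_congr rfl fun u hu => ?_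
    have hu' := Finset.mem_Icc.mp hu
    exact (hsh.elsewhere u (by omega) (by have := hsh.a_lt_b; omega)).symm
  · have ha_mem : a ∈ Finset.Icc 1 i := Finset.mem_Icc.mpr ⟨hsh.a_pos, h⟩
    rcases lt_or_ge i b with h2 | h2
    · rw [if_pos ⟨h, h2⟩]
      rw [← Finset.add_sum_erase _ _ ha_mem, ← Finset.add_sum_erase _ _ ha_mem]
      have herase : ∑ u ∈ (Finset.Icc 1 i).erase a, α.parts u
          = ∑ u ∈ (Finset.Icc 1 i).erase a, β.parts u := by
        refine Finset.sum_congr rfl fun u hu => ?_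
        have h3 := Finset.mem_erase.mp hu
        have h4 := Finset.mem_Icc.mp h3.2
        exact (hsh.elsewhere u h3.1 (by omega)).symm
      have hat := hsh.at_a
      omega
    · rw [if_neg (by omega)]
      have hb_mem : b ∈ (Finset.Icc 1 i).erase a :=
        Finset.mem_erase.mpr ⟨(Nat.ne_of_gt hsh.a_lt_b), Finset.mem_Icc.mpr ⟨by have := hsh.a_pos; have := hsh.a_lt_b; omega, h2⟩⟩
      rw [← Finset.add_sum_erase _ _ ha_mem, ← Finset.add_sum_erase _ _ ha_mem,
        ← Finset.add_sum_erase _ _ hb_mem, ← Finset.add_sum_erase _ _ hb_mem]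
      have herase : ∑ u ∈ ((Finset.Icc 1 i).erase a).erase b, α.parts u
          = ∑ u ∈ ((Finset.Icc 1 i).erase a).erase b, β.parts u := by
        refine Finset.sum_congr rfl fun u hu => ?_
        have h3 := Finset.mem_erase.mp hu
        have h4 := Finset.mem_erase.mp h3.2
        exact (hsh.elsewhere u h4.1 h3.1).symm
      have hat := hsh.at_a
      have hbt := hsh.at_b
      omega

lemma S4_ge {α β : Partition n} {a b : ℕ} (hsh : OneBoxShift α β a b)
    {T : ℕ × ℕ → ℕ} (hss : IsSemistandard α T) (htype : IsTypeOf α β.parts T)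
    (i r : ℕ) (hi : 1 ≤ i) (hr2 : r + 1 ≤ β.parts (i + 1))
    (hbad : ¬(a ≤ i ∧ i < b ∧ r + 1 = β.parts (i + 1))) :
    α.parts i + r + 1 ≤ rowContent α T i i + rowContent α T i (i + 1)
      + rowContent α T (i + 1) i + rowContent α T (i + 1) (i + 1) := by
  set Z := ((Finset.Icc 1 (α.parts i)).filter fun c => i < T (i, c)).card with hZdef
  set Z' := ∑ u ∈ Finset.Icc 1 (i - 1), rowContent α T u (i + 1) with hZ'def
  -- row i splits into entries = i and entries > i
  have h1 : rowContent α T i i + Z = α.parts i := by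
    have hsplit := Finset.card_filter_add_card_filter_not
      (s := Finset.Icc 1 (α.parts i)) (p := fun c => T (i, c) = i)
    have heq : (Finset.Icc 1 (α.parts i)).filter (fun c => ¬ T (i, c) = i)
        = (Finset.Icc 1 (α.parts i)).filter fun c => i < T (i, c) := by
      apply Finset.filter_congr
      intro c hc
      have hc' := Finset.mem_Icc.mp hc
      have := T_ge_row hss htype i c ⟨hi, hc'.1, hc'.2⟩
      constructor
      · intro h; omega
      · intro h; omega
    rw [heq, Nat.card_Icc] at hsplit
    simp only [rowContent, hZdef]
    omega
  -- all entries equal to i+1 live in rows ≤ i+1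
  have h2 : rowContent α T (i + 1) (i + 1) + rowContent α T i (i + 1) + Z'
      = β.parts (i + 1) := by
    have hb := count_value hss htype (i + 1) (i + 1) (by omega) le_rfl
    have e1 : ∑ u ∈ Finset.Icc 1 (i + 1), rowContent α T u (i + 1)
        = ∑ u ∈ Finset.Icc 1 i, rowContent α T u (i + 1) + rowContent α T (i + 1) (i + 1) :=
      Finset.sum_Icc_succ_top (by omega) _
    have e2 : ∑ u ∈ Finset.Icc 1 i, rowContent α T u (i + 1)
        = Z' + rowContent α T i (i + 1) := by
      have hi' : i - 1 + 1 = i := by omega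
      rw [hZ'def, ← hi']
      exact Finset.sum_Icc_succ_top (by omega) _
    omega
  -- Z and Z' are bounded by the number of entries > i in rows ≤ i
  have h3 : Z + Z' ≤ ((cellFinset α).filter fun cc => cc.1 ≤ i ∧ i < T cc).card := by
    set S1 := (cellFinset α).filter fun cc => cc.1 ≤ i ∧ (cc.1 = i ∧ i < T cc) with hS1
    set S2 := (cellFinset α).filter fun cc => cc.1 ≤ i - 1 ∧ T cc = i + 1 with hS2
    have hZ1 : S1.card = Z := by
      rw [hS1, row_block_card α i (fun cc => cc.1 = i ∧ i < T cc)]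
      rw [Finset.sum_eq_single i]
      · rw [hZdef]; congr 1
        apply Finset.filter_congr
        intro c _
        simp
      · intro u hu hne
        rw [Finset.card_eq_zero, Finset.filter_eq_empty_iff]
        intro c _
        simp [hne]
      · intro hmem
        exact absurd (Finset.mem_Icc.mpr ⟨hi, le_rfl⟩) hmem
    have hZ2 : S2.card = Z' := by
      rw [hS2, row_block_card α (i - 1) (fun cc => T cc = i + 1), hZ'def]
      simp only [rowContent]
    have hdisj : Disjoint S1 S2 := by
      rw [Finset.disjoint_left]
      intro cc hc1 hc2
      rw [hS1, Finset.mem_filter] at hc1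
      rw [hS2, Finset.mem_filter] at hc2
      omega
    have hsub : S1 ∪ S2 ⊆ (cellFinset α).filter fun cc => cc.1 ≤ i ∧ i < T cc := by
      intro cc hcc
      rcases Finset.mem_union.mp hcc with h | h
      · rw [hS1, Finset.mem_filter] at h
        exact Finset.mem_filter.mpr ⟨h.1, h.2.1, h.2.2.2⟩
      · rw [hS2, Finset.mem_filter] at h
        exact Finset.mem_filter.mpr ⟨h.1, by omega, by omega⟩
    calc Z + Z' = S1.card + S2.card := by rw [hZ1, hZ2]
    _ = (S1 ∪ S2).card := (Finset.card_union_of_disjoint hdisj).symm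
    _ ≤ _ := Finset.card_le_card hsub
  have h4 := G_eq hss htype i
  have h5 := sum_parts_shift hsh i
  by_cases hab : a ≤ i ∧ i < b
  · have hr3 : r + 2 ≤ β.parts (i + 1) := by
      have : ¬ r + 1 = β.parts (i + 1) := fun h => hbad ⟨hab.1, hab.2, h⟩
      omega
    rw [if_pos hab] at h5
    omega
  · rw [if_neg hab] at h5
    omega

open Classical in
/-- Key combinatorial lemma: in the "bad" cases, every `ν`-tabloid `h` arising in the image
of a tabloid compatible with `T` has two symbols in one column of `t` with equal values. -/
lemma exists_repeat {α β : Partition n} {a b : ℕ} (hsh : OneBoxShift α β a b)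
    {T : ℕ × ℕ → ℕ} (hss : IsSemistandard α T) (htype : IsTypeOf α β.parts T)
    (i r : ℕ) (hi : 1 ≤ i) (hr2 : r + 1 ≤ β.parts (i + 1))
    (hbad : ¬(a ≤ i ∧ i < b ∧ r + 1 = β.parts (i + 1)))
    (t : Placement α) (g : Tabloid n β.parts)
    (hg : ∀ u v, (Finset.univ.filter fun k => (t.pos k).1 = u ∧ g.1 k = v).card
      = rowContent α T u v)
    (h : Tabloid n (nuComp β.parts i r))
    (hl : ∀ k, h.1 k = g.1 k ∨ (g.1 k = i + 1 ∧ h.1 k = i)) :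
    ∃ k k', k ≠ k' ∧ (t.pos k).2 = (t.pos k').2 ∧ h.1 k = h.1 k' := by
  set A : ℕ → Finset (Fin n) :=
    fun u => Finset.univ.filter fun k => (t.pos k).1 = u ∧ h.1 k = i with hA
  set D : ℕ → Finset (Fin n) :=
    fun u => Finset.univ.filter fun k => (t.pos k).1 = u ∧ h.1 k = i + 1 with hD
  -- step 1: per-row inequality
  have step1 : ∀ u, rowContent α T u i + rowContent α T u (i + 1)
      ≤ (A u).card + (D u).card := by
    intro u
    set B : Finset (Fin n) := Finset.univ.filter fun k => (t.pos k).1 = u ∧ g.1 k = i with hB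
    set C : Finset (Fin n) := Finset.univ.filter fun k => (t.pos k).1 = u ∧ g.1 k = i + 1
      with hC
    have hBC : Disjoint B C := by
      rw [Finset.disjoint_left]
      intro k h1 h2
      rw [hB, Finset.mem_filter] at h1
      rw [hC, Finset.mem_filter] at h2
      omega
    have hAD : Disjoint (A u) (D u) := by
      rw [Finset.disjoint_left]
      intro k h1 h2
      rw [hA, Finset.mem_filter] at h1
      rw [hD, Finset.mem_filter] at h2
      omega
    have hsub : B ∪ C ⊆ A u ∪ D u := by
      intro k hk
      rcases Finset.mem_union.mp hk with hk | hk
      · rw [hB, Finset.mem_filter] at hk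
        have : h.1 k = i := by
          rcases hl k with h' | h'
          · rw [h', hk.2.2]
          · omega
        exact Finset.mem_union_left _ (Finset.mem_filter.mpr ⟨Finset.mem_univ _, hk.2.1, this⟩)
      · rw [hC, Finset.mem_filter] at hk
        rcases hl k with h' | h'
        · exact Finset.mem_union_right _
            (Finset.mem_filter.mpr ⟨Finset.mem_univ _, hk.2.1, by rw [h', hk.2.2]⟩)
        · exact Finset.mem_union_left _
            (Finset.mem_filter.mpr ⟨Finset.mem_univ _, hk.2.1, h'.2⟩)
    calc rowContent α T u i + rowContent α T u (i + 1) = B.card + C.card := by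
          rw [hB, hC, hg u i, hg u (i + 1)]
      _ = (B ∪ C).card := (Finset.card_union_of_disjoint hBC).symm
      _ ≤ (A u ∪ D u).card := Finset.card_le_card hsub
      _ ≤ (A u).card + (D u).card := Finset.card_union_le _ _
  -- step 2: total number of (i+1)-entries of h is r
  have step2 : (D i).card + (D (i + 1)).card ≤ r := by
    have htot : (Finset.univ.filter fun k => h.1 k = i + 1).card = r := by
      have := h.2 (i + 1)
      rw [this]
      simp [nuComp]
    have hdisj : Disjoint (D i) (D (i + 1)) := by
      rw [Finset.disjoint_left]
      intro k h1 h2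
      rw [hD, Finset.mem_filter] at h1 h2
      omega
    have hsub : D i ∪ D (i + 1) ⊆ Finset.univ.filter fun k => h.1 k = i + 1 := by
      intro k hk
      rcases Finset.mem_union.mp hk with hk | hk <;>
        · rw [hD, Finset.mem_filter] at hk
          exact Finset.mem_filter.mpr ⟨Finset.mem_univ _, hk.2.2⟩
    calc (D i).card + (D (i + 1)).card = (D i ∪ D (i + 1)).card :=
          (Finset.card_union_of_disjoint hdisj).symm
      _ ≤ _ := Finset.card_le_card hsub
      _ = r := htot
  -- step 3: pigeonhole bound
  have step3 : α.parts i + 1 ≤ (A i).card + (A (i + 1)).card := by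
    have hS4 := S4_ge hsh hss htype i r hi hr2 hbad
    have s1 := step1 i
    have s2 := step1 (i + 1)
    omega
  -- step 4: pigeonhole on columns
  set C1 : Finset ℕ := (A i).image fun k => (t.pos k).2 with hC1
  set C2 : Finset ℕ := (A (i + 1)).image fun k => (t.pos k).2 with hC2
  have hcard1 : C1.card = (A i).card := by
    rw [hC1]
    apply Finset.card_image_of_injOn
    intro k hk k' hk' hcol
    rw [hA, Finset.coe_filter] at hk hk'
    simp only [Set.mem_setOf_eq] at hk hk'
    exact t.inj (Prod.ext (hk.2.1.trans hk'.2.1.symm) hcol)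
  have hcard2 : C2.card = (A (i + 1)).card := by
    rw [hC2]
    apply Finset.card_image_of_injOn
    intro k hk k' hk' hcol
    rw [hA, Finset.coe_filter] at hk hk'
    simp only [Set.mem_setOf_eq] at hk hk'
    exact t.inj (Prod.ext (hk.2.1.trans hk'.2.1.symm) hcol)
  have hsub1 : C1 ⊆ Finset.Icc 1 (α.parts i) := by
    intro x hx
    obtain ⟨k, hk, rfl⟩ := Finset.mem_image.mp hx
    rw [hA, Finset.mem_filter] at hk
    obtain ⟨h1, h2, h3⟩ := t.mem k
    exact Finset.mem_Icc.mpr ⟨h2, by rw [hk.2.1] at h3; exact h3⟩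
  have hsub2 : C2 ⊆ Finset.Icc 1 (α.parts i) := by
    intro x hx
    obtain ⟨k, hk, rfl⟩ := Finset.mem_image.mp hx
    rw [hA, Finset.mem_filter] at hk
    obtain ⟨h1, h2, h3⟩ := t.mem k
    have hle : α.parts (i + 1) ≤ α.parts i := α.antitone hi (Nat.le_succ i)
    exact Finset.mem_Icc.mpr ⟨h2, by rw [hk.2.1] at h3; omega⟩
  have hnotdisj : ¬ Disjoint C1 C2 := by
    intro hd
    have h1 : (C1 ∪ C2).card = C1.card + C2.card := Finset.card_union_of_disjoint hd
    have h2 : C1 ∪ C2 ⊆ Finset.Icc 1 (α.parts i) := Finset.union_subset hsub1 hsub2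
    have h3 := Finset.card_le_card h2
    rw [h1, Nat.card_Icc] at h3
    omega
  rw [Finset.not_disjoint_iff] at hnotdisj
  obtain ⟨x, hx1, hx2⟩ := hnotdisj
  obtain ⟨k, hk, hkx⟩ := Finset.mem_image.mp hx1
  obtain ⟨k', hk', hkx'⟩ := Finset.mem_image.mp hx2
  rw [hA, Finset.mem_filter] at hk hk'
  refine ⟨k, k', ?_, by rw [hkx, hkx'], by rw [hk.2.2, hk'.2.2]⟩
  intro hkk
  rw [hkk] at hk
  omega

/-! ### Permutation action lemmas -/

lemma permTabloid_apply (c : ℕ → ℕ) (π : Equiv.Perm (Fin n)) (f : Tabloid n c) (k : Fin n) :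
    (permTabloid c π f).1 k = f.1 (π.symm k) := rfl

lemma permTabloid_one (c : ℕ → ℕ) (f : Tabloid n c) : permTabloid c 1 f = f := by
  apply Subtype.ext; funext k; rfl

lemma permTabloid_mul (c : ℕ → ℕ) (σ π : Equiv.Perm (Fin n)) (f : Tabloid n c) :
    permTabloid c σ (permTabloid c π f) = permTabloid c (σ * π) f := by
  apply Subtype.ext; funext k
  have hk : (σ * π).symm k = π.symm (σ.symm k) := by
    simp [← Equiv.Perm.inv_def, mul_inv_rev]
  simp [permTabloid, hk]

lemma permTabloid_inv_cancel (c : ℕ → ℕ) (σ : Equiv.Perm (Fin n)) (f : Tabloid n c) :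
    permTabloid c σ⁻¹ (permTabloid c σ f) = f := by
  rw [permTabloid_mul, inv_mul_cancel, permTabloid_one]

lemma permTabloid_cancel_inv (c : ℕ → ℕ) (σ : Equiv.Perm (Fin n)) (f : Tabloid n c) :
    permTabloid c σ (permTabloid c σ⁻¹ f) = f := by
  rw [permTabloid_mul, mul_inv_cancel, permTabloid_one]

lemma permTabloid_swap (c : ℕ → ℕ) (k k' : Fin n) (f : Tabloid n c)
    (he : f.1 k = f.1 k') : permTabloid c (Equiv.swap k k') f = f := by
  apply Subtype.ext; funext m
  show f.1 ((Equiv.swap k k').symm m) = f.1 m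
  rw [Equiv.symm_swap]
  rcases eq_or_ne m k with rfl | hk
  · rw [Equiv.swap_apply_left]; exact he.symm
  rcases eq_or_ne m k' with rfl | hk'
  · rw [Equiv.swap_apply_right]; exact he
  · rw [Equiv.swap_apply_of_ne_of_ne hk hk']

/-! ### Values of `theta` and `psi` on single tabloids -/

open Classical in
lemma theta_single (R : Type*) [CommRing R] (α : Partition n) (c : ℕ → ℕ) (T : ℕ × ℕ → ℕ)
    (f : Tabloid n α.parts) :
    theta R α c T (Finsupp.single f 1) =
      ∑ g ∈ Finset.univ.filter (fun g : Tabloid n c =>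
          ∀ u v, (Finset.univ.filter fun k => f.1 k = u ∧ g.1 k = v).card
            = rowContent α T u v),
        Finsupp.single g (1 : R) := by
  rw [theta, Finsupp.lift_apply, Finsupp.sum_single_index]
  · rw [one_smul]
  · rw [zero_smul]

open Classical in
lemma psi_single (R : Type*) [CommRing R] (c : ℕ → ℕ) (i r : ℕ) (g : Tabloid n c) :
    psi R c i r (Finsupp.single g 1) =
      ∑ h ∈ Finset.univ.filter (fun h : Tabloid n (nuComp c i r) =>
          ∀ k, h.1 k = g.1 k ∨ (g.1 k = i + 1 ∧ h.1 k = i)),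
        Finsupp.single h (1 : R) := by
  rw [psi, Finsupp.lift_apply, Finsupp.sum_single_index]
  · rw [one_smul]
  · rw [zero_smul]

/-! ### Equivariance of the compatibility conditions -/

lemma rowTabloid_apply {α : Partition n} (t : Placement α) (σ : Equiv.Perm (Fin n))
    (k : Fin n) : (rowTabloid t σ).1 k = (t.pos (σ k)).1 := rfl

lemma compat_perm_iff {α : Partition n} (T : ℕ × ℕ → ℕ) (c : ℕ → ℕ) (t : Placement α)
    (σ : Equiv.Perm (Fin n)) (g : Tabloid n c) :
    (∀ u v, (Finset.univ.filter fun k => (rowTabloid t σ).1 k = u ∧ g.1 k = v).card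
        = rowContent α T u v)
    ↔ (∀ u v, (Finset.univ.filter fun k =>
          (rowTabloid t 1).1 k = u ∧ (permTabloid c σ g).1 k = v).card
        = rowContent α T u v) := by
  classical
  have hc : ∀ u v, (Finset.univ.filter fun k => (rowTabloid t σ).1 k = u ∧ g.1 k = v).card
      = (Finset.univ.filter fun k =>
          (rowTabloid t 1).1 k = u ∧ (permTabloid c σ g).1 k = v).card := by
    intro u v
    apply Finset.card_equiv σ
    intro k
    rw [Finset.mem_filter, Finset.mem_filter]
    simp [rowTabloid_apply, permTabloid_apply]
  constructor
  · intro H u v; rw [← hc]; exact H u v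
  · intro H u v; rw [hc]; exact H u v

lemma lower_perm_iff (c : ℕ → ℕ) (i r : ℕ) (σ : Equiv.Perm (Fin n)) (g : Tabloid n c)
    (h : Tabloid n (nuComp c i r)) :
    (∀ k, h.1 k = g.1 k ∨ (g.1 k = i + 1 ∧ h.1 k = i)) ↔
    (∀ k, (permTabloid _ σ h).1 k = (permTabloid c σ g).1 k ∨
      ((permTabloid c σ g).1 k = i + 1 ∧ (permTabloid _ σ h).1 k = i)) := by
  constructor
  · intro H k; exact H (σ.symm k)
  · intro H k
    have := H (σ k)
    simpa only [permTabloid_apply, Equiv.symm_apply_apply] using this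

/-! ### Vanishing of the composite on polytabloids -/

open Classical in
lemma composite_polytabloid_zero (R : Type*) [CommRing R]
    {α β : Partition n} {a b : ℕ} (hsh : OneBoxShift α β a b)
    {T : ℕ × ℕ → ℕ} (hss : IsSemistandard α T) (htype : IsTypeOf α β.parts T)
    (i r : ℕ) (hi : 1 ≤ i) (hr2 : r + 1 ≤ β.parts (i + 1))
    (hbad : ¬(a ≤ i ∧ i < b ∧ r + 1 = β.parts (i + 1)))
    (t : Placement α) :
    psi R β.parts i r (theta R α β.parts T (polytabloid R t)) = 0 := by
  classical
  rw [polytabloid, map_sum, map_sum]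
  -- notation for filters
  set F : Tabloid n α.parts → Finset (Tabloid n β.parts) := fun f =>
    Finset.univ.filter (fun g : Tabloid n β.parts =>
      ∀ u v, (Finset.univ.filter fun k => f.1 k = u ∧ g.1 k = v).card
        = rowContent α T u v) with hF
  set L : Tabloid n β.parts → Finset (Tabloid n (nuComp β.parts i r)) := fun g =>
    Finset.univ.filter (fun h : Tabloid n (nuComp β.parts i r) =>
      ∀ k, h.1 k = g.1 k ∨ (g.1 k = i + 1 ∧ h.1 k = i)) with hL
  have hterm : ∀ σ ∈ colStab t,
      psi R β.parts i r (theta R α β.parts T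
        (((Equiv.Perm.sign σ : ℤ) : R) • Finsupp.single (rowTabloid t σ) (1 : R)))
      = ((Equiv.Perm.sign σ : ℤ) : R) •
          ∑ g ∈ F (rowTabloid t 1), ∑ h ∈ L g,
            Finsupp.single (permTabloid (nuComp β.parts i r) σ⁻¹ h) (1 : R) := by
    intro σ _
    rw [map_smul, map_smul, theta_single, map_sum]
    congr 1
    have hinner : ∀ g : Tabloid n β.parts,
        psi R β.parts i r (Finsupp.single g 1)
          = ∑ h ∈ L (permTabloid β.parts σ g),
              Finsupp.single (permTabloid (nuComp β.parts i r) σ⁻¹ h) (1 : R) := by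
      intro g
      rw [psi_single]
      refine Finset.sum_nbij' (fun h => permTabloid (nuComp β.parts i r) σ h)
        (fun h => permTabloid (nuComp β.parts i r) σ⁻¹ h) ?_ ?_ ?_ ?_ ?_
      · intro h hh
        simp only [hL, Finset.mem_filter, Finset.mem_univ, true_and] at hh ⊢
        exact (lower_perm_iff β.parts i r σ g h).mp hh
      · intro h hh
        simp only [hL, Finset.mem_filter, Finset.mem_univ, true_and] at hh ⊢
        have := (lower_perm_iff β.parts i r σ⁻¹ (permTabloid β.parts σ g) h).mp hh
        rwa [permTabloid_inv_cancel] at this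
      · intro h _; exact permTabloid_inv_cancel _ σ h
      · intro h _; exact permTabloid_cancel_inv _ σ h
      · intro h _
        exact congrArg (fun x => Finsupp.single x (1 : R)) (permTabloid_inv_cancel _ σ h).symm
    calc ∑ g ∈ F (rowTabloid t σ), psi R β.parts i r (Finsupp.single g 1)
        = ∑ g ∈ F (rowTabloid t σ), ∑ h ∈ L (permTabloid β.parts σ g),
            Finsupp.single (permTabloid (nuComp β.parts i r) σ⁻¹ h) (1 : R) :=
          Finset.sum_congr rfl fun g _ => hinner g
      _ = ∑ g ∈ F (rowTabloid t 1), ∑ h ∈ L g,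
            Finsupp.single (permTabloid (nuComp β.parts i r) σ⁻¹ h) (1 : R) := by
          refine Finset.sum_nbij' (fun g => permTabloid β.parts σ g)
            (fun g => permTabloid β.parts σ⁻¹ g) ?_ ?_ ?_ ?_ ?_
          · intro g hg
            simp only [hF, Finset.mem_filter, Finset.mem_univ, true_and] at hg ⊢
            exact (compat_perm_iff T β.parts t σ g).mp hg
          · intro g hg
            simp only [hF, Finset.mem_filter, Finset.mem_univ, true_and] at hg ⊢
            have := (compat_perm_iff T β.parts t σ (permTabloid β.parts σ⁻¹ g)).mpr
            apply this
            rwa [permTabloid_cancel_inv]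
          · intro g _; exact permTabloid_inv_cancel _ σ g
          · intro g _; exact permTabloid_cancel_inv _ σ g
          · intro g _; rfl
  rw [Finset.sum_congr rfl hterm]
  -- swap the order of summation and kill each inner sum by a sign-reversing involution
  simp_rw [Finset.smul_sum]
  rw [Finset.sum_comm]
  refine Finset.sum_eq_zero fun g hg => ?_
  rw [Finset.sum_comm]
  refine Finset.sum_eq_zero fun h hh => ?_
  -- extract the combinatorial data
  have hone : ∀ k : Fin n, (rowTabloid t 1).1 k = (t.pos k).1 := fun k => rfl
  have hg2 : ∀ u v, (Finset.univ.filter fun k => (t.pos k).1 = u ∧ g.1 k = v).card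
      = rowContent α T u v := by
    intro u v
    rw [← (Finset.mem_filter.mp hg).2 u v]
    apply Finset.card_equiv (Equiv.refl _)
    intro k
    simp [hone k]
  have hh2 : ∀ k, h.1 k = g.1 k ∨ (g.1 k = i + 1 ∧ h.1 k = i) :=
    (Finset.mem_filter.mp hh).2
  obtain ⟨k, k', hkk, hcol, hval⟩ :=
    exists_repeat hsh hss htype i r hi hr2 hbad t g hg2 h hh2
  set τ : Equiv.Perm (Fin n) := Equiv.swap k k' with hτ
  have hτmem : τ ∈ colStab t := by
    rw [colStab, Finset.mem_filter]
    refine ⟨Finset.mem_univ _, fun m => ?_⟩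
    rcases eq_or_ne m k with rfl | hm1
    · rw [hτ, Equiv.swap_apply_left, ← hcol]
    rcases eq_or_ne m k' with rfl | hm2
    · rw [hτ, Equiv.swap_apply_right, hcol]
    · rw [hτ, Equiv.swap_apply_of_ne_of_ne hm1 hm2]
  have hτfix : permTabloid (nuComp β.parts i r) τ⁻¹ h = h := by
    rw [hτ, Equiv.swap_inv]
    exact permTabloid_swap _ k k' h hval
  apply Finset.sum_involution (g := fun σ _ => τ * σ)
  · intro σ _
    have h1 : permTabloid (nuComp β.parts i r) (τ * σ)⁻¹ h
        = permTabloid (nuComp β.parts i r) σ⁻¹ h := by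
      rw [mul_inv_rev, ← permTabloid_mul, hτfix]
    have h2 : ((Equiv.Perm.sign (τ * σ) : ℤ) : R) = -((Equiv.Perm.sign σ : ℤ) : R) := by
      rw [Equiv.Perm.sign_mul, hτ, Equiv.Perm.sign_swap hkk]
      push_cast
      ring
    rw [h1, h2, ← add_smul]
    simp
  · intro σ _ _
    intro heq
    have : τ = 1 := mul_right_cancel (by rw [heq, one_mul])
    rw [hτ] at this
    exact hkk (Equiv.swap_eq_one_iff.mp this)
  · intro σ hσ
    rw [colStab, Finset.mem_filter] at hσ ⊢
    refine ⟨Finset.mem_univ _, fun m => ?_⟩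
    have hτ2 := (Finset.mem_filter.mp hτmem).2
    calc (t.pos ((τ * σ) m)).2 = (t.pos (τ (σ m))).2 := rfl
      _ = (t.pos (σ m)).2 := hτ2 (σ m)
      _ = (t.pos m).2 := hσ.2 m
  · intro σ _
    rw [← mul_assoc, Equiv.swap_mul_self, one_mul]

end Stmt9Aux

/-- Let `F` be a field of characteristic `p > 2`, `β` a one-box-shift of
`α` with `β_a = α_a - 1`, `β_b = α_b + 1`, `a < b`, and `T` a semistandard `α`-tableau of
type `β`.  If `i ≥ 1` and `1 ≤ r ≤ β_{i+1} - 1` are such that the composite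
`θ̂_T ∘ ψ_{i,r} : S^α → M^ν` is non-zero, then `a ≤ i < b` and `r = β_{i+1} - 1`. -/
theorem stmt9 (F : Type*) [Field F] (p : ℕ) [CharP F p] (hp : 2 < p)
    {n : ℕ} (α β : Partition n) (a b : ℕ) (hshift : OneBoxShift α β a b)
    (T : ℕ × ℕ → ℕ) (hss : IsSemistandard α T) (htype : IsTypeOf α β.parts T)
    (i r : ℕ) (hi : 1 ≤ i) (hr1 : 1 ≤ r) (hr2 : r + 1 ≤ β.parts (i + 1))
    (hne : (psi F β.parts i r).comp (thetaHat F α β.parts T) ≠ 0) :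
    a ≤ i ∧ i < b ∧ r + 1 = β.parts (i + 1) := by
  by_contra hbad
  apply hne
  apply LinearMap.ext
  intro x
  obtain ⟨x, hx⟩ := x
  have hzero : psi F β.parts i r (theta F α β.parts T x) = 0 := by
    induction hx using Submodule.span_induction with
    | mem y hy =>
      obtain ⟨t, rfl⟩ := hy
      exact composite_polytabloid_zero F hshift hss htype i r hi hr2 hbad t
    | zero => rw [map_zero, map_zero]
    | add y z _ _ hy hz => rw [map_add, map_add, hy, hz, add_zero]
    | smul c y _ hy => rw [map_smul, map_smul, hy, smul_zero]
  exact hzero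

end CarterPayne
end
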